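/- Let A = ℤ[[t]] with ideal I = tℤ[[t]], and let k be any field. Consider K = k((t)) with its t-adic valuation, valuation ring O_K = k[[t]], and its natural L_DP-structure. Then for every choice of an element u of the maximal ideal M_K, there is exactly one analytic A-structure (σ_m)_{m≥0} on K with σ_0(t) = u. -/

import Mathlib

open scoped Classical
open MeasureTheory

noncomputable section
section Analytic

set_option maxHeartbeats 1000000 in
set_option synthInstance.maxHeartbeats 200000 in
/-- The ideal generated by `I` in the polynomial ring `A[ξ_1,…,ξ_m]`. -/
def polyI (A : Type) [CommRing A] (I : Ideal A) (m : ℕ) : Ideal (MvPolynomial (Fin m) A) :=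
  I.map MvPolynomial.C

variable (A : Type) [CommRing A] (I : Ideal A)

set_option maxHeartbeats 1000000 in
set_option synthInstance.maxHeartbeats 400000 in
/-- The `I`-adic completion of `A[ξ_1,…,ξ_m]`, realized as the subring of compatible
sequences in the product of the quotients modulo the powers of the ideal generated
by `I`. -/
def AmSub (m : ℕ) : Subring (∀ k : ℕ, MvPolynomial (Fin m) A ⧸ (polyI A I m ^ k)) where
  carrier := {f | ∀ k : ℕ, Ideal.Quotient.factor
    (Ideal.pow_le_pow_right (Nat.le_succ k)) (f (k + 1)) = f k}
  zero_mem' := fun k => map_zero _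
  one_mem' := fun k => map_one _
  add_mem' := fun hf hg k => by
    rw [Pi.add_apply, map_add, hf k, hg k]; rfl
  neg_mem' := fun hf k => by
    rw [Pi.neg_apply, map_neg, hf k]; rfl
  mul_mem' := fun hf hg k => by
    rw [Pi.mul_apply, map_mul, hf k, hg k]; rfl

/-- `A_m`, the `I`-adic completion of the polynomial ring `A[ξ_1,…,ξ_m]`. -/
abbrev Am (m : ℕ) : Type := ↥(AmSub A I m)

set_option maxHeartbeats 1000000 in
set_option synthInstance.maxHeartbeats 400000 in
/-- The canonical map from the polynomial ring to its completion. -/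
def toAm (m : ℕ) : MvPolynomial (Fin m) A →+* Am A I m where
  toFun p := ⟨fun _ => Ideal.Quotient.mk _ p, fun k => Ideal.Quotient.factor_mk _ p⟩
  map_one' := Subtype.ext (funext fun _ => map_one (Ideal.Quotient.mk _))
  map_mul' p q := Subtype.ext (funext fun _ => map_mul (Ideal.Quotient.mk _) p q)
  map_zero' := Subtype.ext (funext fun _ => map_zero (Ideal.Quotient.mk _))
  map_add' p q := Subtype.ext (funext fun _ => map_add (Ideal.Quotient.mk _) p q)

/-- The inclusion `A[ξ_1,…,ξ_m] → A[ξ_1,…,ξ_{m+1}]`, as a ring homomorphism. -/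
def rnHom (m : ℕ) : MvPolynomial (Fin m) A →+* MvPolynomial (Fin (m + 1)) A :=
  (MvPolynomial.rename (Fin.castSucc : Fin m → Fin (m + 1))).toRingHom

lemma rnHom_polyI_pow (m k : ℕ) :
    (polyI A I m) ^ k ≤ ((polyI A I (m + 1)) ^ k).comap (rnHom A m) := by
  rw [← Ideal.map_le_iff_le_comap, Ideal.map_pow]
  refine Ideal.pow_right_mono ?_ k
  rw [polyI, Ideal.map_map]
  refine le_of_eq ?_
  congr 1
  exact RingHom.ext fun a => MvPolynomial.rename_C _ a

set_option maxHeartbeats 1000000 in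
set_option synthInstance.maxHeartbeats 400000 in
/-- The extension map `A_m → A_{m+1}` induced by the inclusion of polynomial rings. -/
def liftRename (m : ℕ) : Am A I m →+* Am A I (m + 1) where
  toFun f := ⟨fun k => Ideal.quotientMap _ (rnHom A m) (rnHom_polyI_pow A I m k) (f.1 k), by
    intro k
    show Ideal.Quotient.factor _
        (Ideal.quotientMap _ (rnHom A m) (rnHom_polyI_pow A I m (k + 1)) (f.1 (k + 1)))
      = Ideal.quotientMap _ (rnHom A m) (rnHom_polyI_pow A I m k) (f.1 k)
    rw [← f.2 k]
    obtain ⟨p, hp⟩ := Ideal.Quotient.mk_surjective (f.1 (k + 1))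
    rw [← hp, Ideal.quotientMap_mk, Ideal.Quotient.factor_mk, Ideal.Quotient.factor_mk,
      Ideal.quotientMap_mk]⟩
  map_one' := Subtype.ext (funext fun _ => map_one (Ideal.quotientMap _ _ _))
  map_mul' f g := Subtype.ext (funext fun k =>
    map_mul (Ideal.quotientMap _ (rnHom A m) (rnHom_polyI_pow A I m k)) (f.1 k) (g.1 k))
  map_zero' := Subtype.ext (funext fun _ => map_zero (Ideal.quotientMap _ _ _))
  map_add' f g := Subtype.ext (funext fun k =>
    map_add (Ideal.quotientMap _ (rnHom A m) (rnHom_polyI_pow A I m k)) (f.1 k) (g.1 k))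

set_option maxHeartbeats 1000000 in
set_option synthInstance.maxHeartbeats 400000 in
/-- An analytic `A`-structure (Definition 2.8 of the paper) on a field `K` with a
distinguished subring `O` (the valuation ring) and an ideal `M ⊆ O` (the maximal
ideal): ring homomorphisms `σ_m` from `A_m` to the ring of `O`-valued functions on
`O^m`, sending `I` into `M`, sending `ξ_i` to the `i`-th coordinate function, and
compatible with the inclusions `A_m → A_{m+1}`. -/
structure AnalyticAStructure (K : Type) [Field K] (O : Subring K) (Mx : Ideal O) where
  (σ : ∀ m : ℕ, Am A I m →+* ((Fin m → O) → O))
  (mem_max : ∀ a ∈ I, ∀ v, σ 0 (toAm A I 0 (MvPolynomial.C a)) v ∈ Mx)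
  (coord : ∀ (m : ℕ) (i : Fin m) (v), σ m (toAm A I m (MvPolynomial.X i)) v = v i)
  (extends_ : ∀ (m : ℕ) (f : Am A I m) (v : Fin (m + 1) → O),
    σ (m + 1) (liftRename A I m f) v = σ m f (v ∘ Fin.castSucc))

end Analytic
section LaurentSeriesStructure

variable (k : Type) [Field k]

/-- The valuation ring `k[[t]]` of the Laurent series field `k((t))`, as the range of
the inclusion of power series. -/
def laurentO : Subring (LaurentSeries k) := (HahnSeries.ofPowerSeries ℤ k).range

set_option maxHeartbeats 1000000 in
set_option synthInstance.maxHeartbeats 400000 in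
/-- The maximal ideal of `k[[t]] ⊆ k((t))`: power series with zero constant term. -/
def laurentM : Ideal (laurentO k) where
  carrier := {x | ∃ p : PowerSeries k, PowerSeries.constantCoeff (R := k) p = 0 ∧
    HahnSeries.ofPowerSeries ℤ k p = (x : LaurentSeries k)}
  zero_mem' := ⟨0, by simp, by simp⟩
  add_mem' := by
    rintro a b ⟨p, hp0, hp⟩ ⟨q, hq0, hq⟩
    exact ⟨p + q, by simp [hp0, hq0], by push_cast [map_add, hp, hq]; ring⟩
  smul_mem' := by
    rintro c x ⟨p, hp0, hp⟩
    obtain ⟨q, hq⟩ := RingHom.mem_range.mp c.2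
    refine ⟨q * p, by simp [hp0], ?_⟩
    rw [map_mul, hq, hp, smul_eq_mul]
    rfl

namespace UA
set_option maxHeartbeats 1000000
set_option synthInstance.maxHeartbeats 400000
open PowerSeries

/-! ### Generic quotient-tower lemmas -/

section Generic
variable {R : Type*} [CommRing R]

lemma factor_factor {I1 I2 I3 : Ideal R} (h12 : I1 ≤ I2) (h23 : I2 ≤ I3) (x : R ⧸ I1) :
    Ideal.Quotient.factor h23 (Ideal.Quotient.factor h12 x) =
      Ideal.Quotient.factor (h12.trans h23) x := by
  obtain ⟨y, rfl⟩ := Ideal.Quotient.mk_surjective x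
  simp [Ideal.Quotient.factor_mk]

lemma compat_le {J : Ideal R} {b : ∀ j : ℕ, R ⧸ J ^ j}
    (hb : ∀ j, Ideal.Quotient.factor (Ideal.pow_le_pow_right (Nat.le_succ j)) (b (j+1)) = b j)
    {i i' : ℕ} (h : i ≤ i') :
    Ideal.Quotient.factor (Ideal.pow_le_pow_right h) (b i') = b i := by
  induction i' , h using Nat.le_induction with
  | base =>
      obtain ⟨y, hy⟩ := Ideal.Quotient.mk_surjective (b i)
      rw [← hy, Ideal.Quotient.factor_mk]
  | succ i' h ih =>
      rw [← ih, ← hb i', factor_factor]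

end Generic

/-! ### Power series side : gluing compatible sequences -/

section PS
variable (k : Type) [Field k]

def XI : Ideal (PowerSeries k) := Ideal.span {PowerSeries.X}

lemma mem_XI_pow_iff {j : ℕ} {w : PowerSeries k} :
    w ∈ XI k ^ j ↔ ∀ d < j, coeff (R := k) d w = 0 := by
  rw [XI, Ideal.span_singleton_pow, Ideal.mem_span_singleton]
  exact PowerSeries.X_pow_dvd_iff

lemma sep {w w' : PowerSeries k}
    (h : ∀ j, Ideal.Quotient.mk (XI k ^ j) w = Ideal.Quotient.mk _ w') : w = w' := by
  ext n
  have h2 := (mem_XI_pow_iff k).mp (Ideal.Quotient.eq.mp (h (n+1))) n (Nat.lt_succ_self n)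
  simpa [sub_eq_zero] using h2

def qlift {j : ℕ} (x : PowerSeries k ⧸ XI k ^ j) : PowerSeries k :=
  (Ideal.Quotient.mk_surjective x).choose

lemma qlift_spec {j : ℕ} (x : PowerSeries k ⧸ XI k ^ j) :
    Ideal.Quotient.mk (XI k ^ j) (qlift k x) = x :=
  (Ideal.Quotient.mk_surjective x).choose_spec

def glue (b : ∀ j : ℕ, PowerSeries k ⧸ XI k ^ j) : PowerSeries k :=
  PowerSeries.mk fun n => coeff (R := k) n (qlift k (b (n+1)))

lemma glue_spec {b : ∀ j : ℕ, PowerSeries k ⧸ XI k ^ j}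
    (hb : ∀ j, Ideal.Quotient.factor (Ideal.pow_le_pow_right (Nat.le_succ j)) (b (j+1)) = b j)
    (j : ℕ) : Ideal.Quotient.mk (XI k ^ j) (glue k b) = b j := by
  rw [← qlift_spec k (b j), Ideal.Quotient.eq]
  rw [mem_XI_pow_iff]
  intro n hn
  have h1 : Ideal.Quotient.mk (XI k ^ (n+1)) (qlift k (b (n+1))) =
      Ideal.Quotient.mk (XI k ^ (n+1)) (qlift k (b j)) := by
    rw [qlift_spec, ← compat_le hb hn]
    conv_lhs => rw [← qlift_spec k (b j)]
    rw [Ideal.Quotient.factor_mk]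
  have h2 := (mem_XI_pow_iff k).mp (Ideal.Quotient.eq.mp h1) n (Nat.lt_succ_self n)
  simpa [glue, sub_eq_zero] using h2

lemma glue_unique {b : ∀ j : ℕ, PowerSeries k ⧸ XI k ^ j} {w : PowerSeries k}
    (hw : ∀ j, Ideal.Quotient.mk (XI k ^ j) w = b j) : glue k b = w := by
  have hb : ∀ j, Ideal.Quotient.factor
      (Ideal.pow_le_pow_right (Nat.le_succ j)) (b (j+1)) = b j := by
    intro j
    rw [← hw j, ← hw (j+1), Ideal.Quotient.factor_mk]
  exact sep k fun j => by rw [glue_spec k hb j, hw j]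

end PS

/-! ### Truncated evaluation of integral power series -/

section Psiu
variable {k : Type} [Field k] {uu : PowerSeries k}

lemma aeval_congr (huu : constantCoeff (R := k) uu = 0) (j : ℕ) {p q : Polynomial ℤ}
    (h : ∀ d < j, p.coeff d = q.coeff d) :
    Ideal.Quotient.mk (XI k ^ j) (Polynomial.aeval uu p) =
      Ideal.Quotient.mk (XI k ^ j) (Polynomial.aeval uu q) := by
  obtain ⟨r, hr⟩ := Polynomial.X_pow_dvd_iff.mpr
    (fun d hdj => by simp [Polynomial.coeff_sub, h d hdj] : ∀ d < j, (p - q).coeff d = 0)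
  rw [Ideal.Quotient.eq, ← map_sub, hr, map_mul, map_pow, Polynomial.aeval_X]
  rw [XI, Ideal.span_singleton_pow, Ideal.mem_span_singleton]
  exact Dvd.dvd.mul_right (pow_dvd_pow_of_dvd (PowerSeries.X_dvd_iff.mpr huu) j) _

def psiu (huu : constantCoeff (R := k) uu = 0) (j : ℕ) : PowerSeries ℤ →+* PowerSeries k ⧸ XI k ^ j where
  toFun a := Ideal.Quotient.mk _ (Polynomial.aeval uu (trunc j a))
  map_one' := by
    refine (aeval_congr huu j (q := 1) ?_).trans (by simp)
    intro d hd
    simp [coeff_trunc, hd, PowerSeries.coeff_one, Polynomial.coeff_one]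
  map_zero' := by
    refine (aeval_congr huu j (q := 0) ?_).trans (by simp)
    intro d hd
    simp [coeff_trunc, hd]
  map_add' a b := by
    rw [← map_add, ← map_add]
    refine aeval_congr huu j fun d hd => ?_
    simp [coeff_trunc, hd, Polynomial.coeff_add]
  map_mul' a b := by
    rw [← map_mul, ← map_mul]
    refine aeval_congr huu j fun d hd => ?_
    simp only [coeff_trunc, Polynomial.coeff_mul, PowerSeries.coeff_mul, if_pos hd]
    refine Finset.sum_congr rfl fun x hx => ?_
    have hx' := Finset.HasAntidiagonal.mem_antidiagonal.mp hx
    rw [if_pos (lt_of_le_of_lt (hx' ▸ Nat.le_add_right x.1 x.2) hd),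
      if_pos (lt_of_le_of_lt (hx' ▸ Nat.le_add_left x.2 x.1) hd)]

lemma psiu_X (huu : constantCoeff (R := k) uu = 0) (j : ℕ) :
    psiu huu j PowerSeries.X = Ideal.Quotient.mk _ uu := by
  show Ideal.Quotient.mk _ (Polynomial.aeval uu (trunc j PowerSeries.X)) = _
  refine (aeval_congr huu j (q := Polynomial.X) ?_).trans (by rw [Polynomial.aeval_X])
  intro d hd
  simp only [coeff_trunc, hd, if_true, PowerSeries.coeff_X, Polynomial.coeff_X]
  simp [eq_comm]

lemma factor_psiu (huu : constantCoeff (R := k) uu = 0) (j : ℕ) (a : PowerSeries ℤ) :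
    Ideal.Quotient.factor (Ideal.pow_le_pow_right (Nat.le_succ j)) (psiu huu (j+1) a)
      = psiu huu j a := by
  show Ideal.Quotient.factor _
      (Ideal.Quotient.mk _ (Polynomial.aeval uu (trunc (j+1) a))) = _
  rw [Ideal.Quotient.factor_mk]
  refine aeval_congr huu j fun d hd => ?_
  simp [coeff_trunc, hd, Nat.lt_succ_of_lt hd]

end Psiu

end UA

namespace UA
set_option maxHeartbeats 1000000
set_option synthInstance.maxHeartbeats 400000
open PowerSeries

/-! ### The ring `A = ℤ⟦X⟧` and the ideals `polyI` -/

abbrev PZ : Type := PowerSeries ℤ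

abbrev IA : Ideal PZ := Ideal.span {PowerSeries.X}

lemma polyI_pow_eq (m j : ℕ) :
    polyI PZ IA m ^ j = Ideal.span {(MvPolynomial.C (PowerSeries.X : PZ)
      : MvPolynomial (Fin m) PZ) ^ j} := by
  rw [polyI, Ideal.map_span, Set.image_singleton, Ideal.span_singleton_pow]

lemma mem_polyI_pow {m j : ℕ} {p : MvPolynomial (Fin m) PZ} :
    p ∈ polyI PZ IA m ^ j ↔ (MvPolynomial.C (PowerSeries.X : PZ)
      : MvPolynomial (Fin m) PZ) ^ j ∣ p := by
  rw [polyI_pow_eq, Ideal.mem_span_singleton]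

lemma toAm_apply (m : ℕ) (p : MvPolynomial (Fin m) PZ) (j : ℕ) :
    (toAm PZ IA m p).1 j = Ideal.Quotient.mk _ p := rfl

lemma CX_pow_ne_zero (m j : ℕ) :
    ((MvPolynomial.C (PowerSeries.X : PZ) : MvPolynomial (Fin m) PZ)) ^ j ≠ 0 := by
  apply pow_ne_zero
  simp only [ne_eq, MvPolynomial.C_eq_zero]
  exact PowerSeries.X_ne_zero

/-- Division by `(C X)^j` in the completion `A_m`, for elements whose `j`-th component
vanishes. -/
lemma exists_div {m j : ℕ} (f : Am PZ IA m) (hf : f.1 j = 0) :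
    ∃ h : Am PZ IA m,
      toAm PZ IA m ((MvPolynomial.C (PowerSeries.X : PZ)) ^ j) * h = f := by
  have hsur : ∀ i : ℕ, ∃ p : MvPolynomial (Fin m) PZ,
      Ideal.Quotient.mk (polyI PZ IA m ^ (j + i)) p = f.1 (j + i) :=
    fun i => Ideal.Quotient.mk_surjective _
  choose p hp using hsur
  have hmem : ∀ i, (MvPolynomial.C (PowerSeries.X : PZ)
      : MvPolynomial (Fin m) PZ) ^ j ∣ p i := by
    intro i
    rw [← mem_polyI_pow, ← Ideal.Quotient.eq_zero_iff_mem]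
    have h1 : Ideal.Quotient.factor
        (Ideal.pow_le_pow_right (Nat.le_add_right j i)) (f.1 (j + i)) = f.1 j :=
      compat_le f.2 (Nat.le_add_right j i)
    rw [← hp i, Ideal.Quotient.factor_mk] at h1
    rw [h1, hf]
  choose r hr using hmem
  have hrcompat : ∀ i, Ideal.Quotient.factor
      (Ideal.pow_le_pow_right (Nat.le_succ i))
      (Ideal.Quotient.mk (polyI PZ IA m ^ (i+1)) (r (i+1)))
      = Ideal.Quotient.mk (polyI PZ IA m ^ i) (r i) := by
    intro i
    rw [Ideal.Quotient.factor_mk, Ideal.Quotient.eq]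
    have h2 : p (i+1) - p i ∈ polyI PZ IA m ^ (j + i) := by
      rw [← Ideal.Quotient.eq]
      have hpd : Ideal.Quotient.mk (polyI PZ IA m ^ (j+i+1)) (p (i+1)) = f.1 (j+i+1) :=
        hp (i+1)
      have h3 := f.2 (j + i)
      rw [← hpd, ← hp i, Ideal.Quotient.factor_mk] at h3
      exact h3
    rw [mem_polyI_pow] at h2 ⊢
    obtain ⟨s, hs⟩ := h2
    refine ⟨s, mul_left_cancel₀ (CX_pow_ne_zero m j) ?_⟩
    rw [mul_sub, ← hr (i+1), ← hr i, hs, pow_add, mul_assoc]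
  refine ⟨⟨fun i => Ideal.Quotient.mk _ (r i), hrcompat⟩, ?_⟩
  apply Subtype.ext
  funext i
  show Ideal.Quotient.mk _ ((MvPolynomial.C (PowerSeries.X : PZ)) ^ j) *
      Ideal.Quotient.mk _ (r i) = f.1 i
  have h4 : Ideal.Quotient.factor
      (Ideal.pow_le_pow_right (Nat.le_add_left i j)) (f.1 (j + i)) = f.1 i :=
    compat_le f.2 (Nat.le_add_left i j)
  rw [← h4, ← hp i, Ideal.Quotient.factor_mk, ← map_mul, ← hr i]

end UA


namespace UA
set_option maxHeartbeats 1000000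
set_option synthInstance.maxHeartbeats 400000
open PowerSeries

section Construction
variable {k : Type} [Field k] {uu : PowerSeries k}

/-! ### Evaluation of polynomials and the induced maps on quotients -/

def evj (huu : constantCoeff (R := k) uu = 0) (m j : ℕ) (vB : Fin m → PowerSeries k) :
    MvPolynomial (Fin m) PZ →+* PowerSeries k ⧸ XI k ^ j :=
  MvPolynomial.eval₂Hom (psiu huu j) fun i => Ideal.Quotient.mk _ (vB i)

lemma evj_CX (huu : constantCoeff (R := k) uu = 0) (m j : ℕ) (vB : Fin m → PowerSeries k) :
    evj huu m j vB (MvPolynomial.C PowerSeries.X) = Ideal.Quotient.mk _ uu := by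
  rw [evj, MvPolynomial.eval₂Hom_C, psiu_X]

lemma evj_vanish (huu : constantCoeff (R := k) uu = 0) (m j : ℕ) (vB : Fin m → PowerSeries k) :
    ∀ p ∈ polyI PZ IA m ^ j, evj huu m j vB p = 0 := by
  intro p hp
  obtain ⟨r, rfl⟩ := mem_polyI_pow.mp hp
  rw [map_mul, map_pow, evj_CX]
  have h1 : (Ideal.Quotient.mk (XI k ^ j) uu) ^ j = 0 := by
    rw [← map_pow, Ideal.Quotient.eq_zero_iff_mem]
    exact Ideal.pow_mem_pow
      (by rw [XI, Ideal.mem_span_singleton]; exact PowerSeries.X_dvd_iff.mpr huu) j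
  rw [h1, zero_mul]

def sbar (huu : constantCoeff (R := k) uu = 0) (m j : ℕ) (vB : Fin m → PowerSeries k) :
    (MvPolynomial (Fin m) PZ ⧸ polyI PZ IA m ^ j) →+* PowerSeries k ⧸ XI k ^ j :=
  Ideal.Quotient.lift _ (evj huu m j vB) (evj_vanish huu m j vB)

lemma sbar_mk (huu : constantCoeff (R := k) uu = 0) (m j : ℕ) (vB : Fin m → PowerSeries k)
    (p : MvPolynomial (Fin m) PZ) :
    sbar huu m j vB (Ideal.Quotient.mk _ p) = evj huu m j vB p :=
  Ideal.Quotient.lift_mk _ _ _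

lemma sbar_compat (huu : constantCoeff (R := k) uu = 0) (m j : ℕ) (vB : Fin m → PowerSeries k)
    (x : MvPolynomial (Fin m) PZ ⧸ polyI PZ IA m ^ (j+1)) :
    Ideal.Quotient.factor (Ideal.pow_le_pow_right (Nat.le_succ j)) (sbar huu m (j+1) vB x)
      = sbar huu m j vB
        (Ideal.Quotient.factor (Ideal.pow_le_pow_right (Nat.le_succ j)) x) := by
  obtain ⟨p, rfl⟩ := Ideal.Quotient.mk_surjective x
  rw [sbar_mk, Ideal.Quotient.factor_mk, sbar_mk, evj, evj, ← RingHom.comp_apply,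
    MvPolynomial.comp_eval₂Hom]
  have h1 : (Ideal.Quotient.factor
      (Ideal.pow_le_pow_right (Nat.le_succ j))).comp (psiu huu (j+1)) = psiu huu j :=
    RingHom.ext (factor_psiu huu j)
  have h2 : (fun i => Ideal.Quotient.factor
        (Ideal.pow_le_pow_right (Nat.le_succ j)) (Ideal.Quotient.mk _ (vB i)))
      = fun i => Ideal.Quotient.mk (XI k ^ j) (vB i) :=
    funext fun i => Ideal.Quotient.factor_mk _ _
  rw [h1, h2]

/-! ### The analytic structure -/

def liftO (x : ↥(laurentO k)) : PowerSeries k := (RingHom.mem_range.mp x.2).choose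

lemma liftO_spec (x : ↥(laurentO k)) :
    HahnSeries.ofPowerSeries ℤ k (liftO x) = (x : LaurentSeries k) :=
  (RingHom.mem_range.mp x.2).choose_spec

lemma Am_one (m j : ℕ) : (1 : Am PZ IA m).1 j = 1 := rfl
lemma Am_mul (m : ℕ) (f g : Am PZ IA m) (j : ℕ) : (f * g).1 j = f.1 j * g.1 j := rfl
lemma Am_add (m : ℕ) (f g : Am PZ IA m) (j : ℕ) : (f + g).1 j = f.1 j + g.1 j := rfl
lemma Am_sub (m : ℕ) (f g : Am PZ IA m) (j : ℕ) : (f - g).1 j = f.1 j - g.1 j := rfl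
lemma Am_zero (m j : ℕ) : (0 : Am PZ IA m).1 j = 0 := rfl

def seqOf (huu : constantCoeff (R := k) uu = 0) (m : ℕ) (f : Am PZ IA m)
    (v : Fin m → ↥(laurentO k)) : ∀ j : ℕ, PowerSeries k ⧸ XI k ^ j :=
  fun j => sbar huu m j (fun i => liftO (v i)) (f.1 j)

lemma seqOf_compat (huu : constantCoeff (R := k) uu = 0) (m : ℕ) (f : Am PZ IA m)
    (v : Fin m → ↥(laurentO k)) (j : ℕ) :
    Ideal.Quotient.factor (Ideal.pow_le_pow_right (Nat.le_succ j))
      (seqOf huu m f v (j+1)) = seqOf huu m f v j := by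
  show Ideal.Quotient.factor _ (sbar huu m (j+1) _ (f.1 (j+1)))
    = sbar huu m j (fun i => liftO (v i)) (f.1 j)
  rw [sbar_compat, f.2 j]

lemma seqOf_spec (huu : constantCoeff (R := k) uu = 0) (m : ℕ) (f : Am PZ IA m)
    (v : Fin m → ↥(laurentO k)) (j : ℕ) :
    Ideal.Quotient.mk (XI k ^ j) (glue k (seqOf huu m f v)) =
      sbar huu m j (fun i => liftO (v i)) (f.1 j) :=
  glue_spec k (seqOf_compat huu m f v) j

def sval (huu : constantCoeff (R := k) uu = 0) (m : ℕ) (f : Am PZ IA m)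
    (v : Fin m → ↥(laurentO k)) : ↥(laurentO k) :=
  ⟨HahnSeries.ofPowerSeries ℤ k (glue k (seqOf huu m f v)), RingHom.mem_range.mpr ⟨_, rfl⟩⟩

lemma liftRename_apply (m : ℕ) (f : Am PZ IA m) (j : ℕ) :
    (liftRename PZ IA m f).1 j =
      Ideal.quotientMap _ (rnHom PZ m) (rnHom_polyI_pow PZ IA m j) (f.1 j) := rfl

def theStructure (huu : constantCoeff (R := k) uu = 0) :
    AnalyticAStructure PZ IA (LaurentSeries k) (laurentO k) (laurentM k) where
  σ m :=
    { toFun := sval huu m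
      map_one' := by
        funext v
        apply Subtype.ext
        show HahnSeries.ofPowerSeries ℤ k (glue k (seqOf huu m 1 v)) = _
        have h : glue k (seqOf huu m 1 v) = 1 := glue_unique k fun j => by
          show Ideal.Quotient.mk _ (1 : PowerSeries k) = sbar huu m j _ ((1 : Am PZ IA m).1 j)
          rw [Am_one, map_one, map_one]
        rw [h, map_one]
        rfl
      map_mul' := fun f g => by
        funext v
        apply Subtype.ext
        show HahnSeries.ofPowerSeries ℤ k (glue k (seqOf huu m (f * g) v)) = _
        have h : glue k (seqOf huu m (f * g) v)
            = glue k (seqOf huu m f v) * glue k (seqOf huu m g v) := glue_unique k fun j => by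
          rw [map_mul, seqOf_spec, seqOf_spec]
          show _ = sbar huu m j _ ((f * g).1 j)
          rw [Am_mul, map_mul]
        rw [h, map_mul]
        rfl
      map_zero' := by
        funext v
        apply Subtype.ext
        show HahnSeries.ofPowerSeries ℤ k (glue k (seqOf huu m 0 v)) = _
        have h : glue k (seqOf huu m 0 v) = 0 := glue_unique k fun j => by
          show Ideal.Quotient.mk _ (0 : PowerSeries k) = sbar huu m j _ ((0 : Am PZ IA m).1 j)
          rw [Am_zero, map_zero, map_zero]
        rw [h, map_zero]
        rfl
      map_add' := fun f g => by
        funext v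
        apply Subtype.ext
        show HahnSeries.ofPowerSeries ℤ k (glue k (seqOf huu m (f + g) v)) = _
        have h : glue k (seqOf huu m (f + g) v)
            = glue k (seqOf huu m f v) + glue k (seqOf huu m g v) := glue_unique k fun j => by
          rw [map_add, seqOf_spec, seqOf_spec]
          show _ = sbar huu m j _ ((f + g).1 j)
          rw [Am_add, map_add]
        rw [h, map_add]
        rfl }
  mem_max := by
    intro a ha v
    have ha0 : constantCoeff (R := ℤ) a = 0 :=
      PowerSeries.X_dvd_iff.mp (Ideal.mem_span_singleton.mp ha)
    refine ⟨glue k (seqOf huu 0 (toAm PZ IA 0 (MvPolynomial.C a)) v), ?_, rfl⟩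
    have h1 := seqOf_spec huu 0 (toAm PZ IA 0 (MvPolynomial.C a)) v 1
    rw [toAm_apply, sbar_mk, evj, MvPolynomial.eval₂Hom_C] at h1
    have h2 : psiu huu 1 a = Ideal.Quotient.mk (XI k ^ 1) 0 := by
      show Ideal.Quotient.mk _ (Polynomial.aeval uu (trunc 1 a)) = _
      refine (aeval_congr huu 1 (q := 0) ?_).trans (by rw [map_zero])
      intro d hd
      interval_cases d
      simp [coeff_trunc, ha0]
    rw [h2] at h1
    have h3 := (mem_XI_pow_iff k).mp (Ideal.Quotient.eq.mp h1) 0 Nat.one_pos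
    rw [← PowerSeries.coeff_zero_eq_constantCoeff]
    simpa using h3
  coord := by
    intro m i v
    apply Subtype.ext
    show HahnSeries.ofPowerSeries ℤ k
      (glue k (seqOf huu m (toAm PZ IA m (MvPolynomial.X i)) v)) = _
    have h : glue k (seqOf huu m (toAm PZ IA m (MvPolynomial.X i)) v) = liftO (v i) :=
      glue_unique k fun j => by
        show Ideal.Quotient.mk _ _ = sbar huu m j _ ((toAm PZ IA m (MvPolynomial.X i)).1 j)
        rw [toAm_apply, sbar_mk, evj, MvPolynomial.eval₂Hom_X']
    rw [h, liftO_spec]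
  extends_ := by
    intro m f v
    apply Subtype.ext
    show HahnSeries.ofPowerSeries ℤ k (glue k (seqOf huu (m+1) (liftRename PZ IA m f) v)) =
      HahnSeries.ofPowerSeries ℤ k (glue k (seqOf huu m f (v ∘ Fin.castSucc)))
    congr 1
    apply congrArg (glue k)
    funext j
    obtain ⟨p, hp⟩ := Ideal.Quotient.mk_surjective (f.1 j)
    show sbar huu (m+1) j _ ((liftRename PZ IA m f).1 j) = sbar huu m j _ (f.1 j)
    rw [liftRename_apply, ← hp, Ideal.quotientMap_mk, sbar_mk, sbar_mk]
    show evj huu (m+1) j _ (MvPolynomial.rename Fin.castSucc p) = _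
    rw [evj, evj, MvPolynomial.eval₂Hom_rename]
    rfl

end Construction
end UA


namespace UA
set_option maxHeartbeats 1000000
set_option synthInstance.maxHeartbeats 400000
open PowerSeries

section Uniqueness
variable {k : Type} [Field k]

lemma toAm_liftRename (m : ℕ) (p : MvPolynomial (Fin m) PZ) :
    liftRename PZ IA m (toAm PZ IA m p)
      = toAm PZ IA (m+1) (MvPolynomial.rename Fin.castSucc p) := by
  apply Subtype.ext
  funext j
  show Ideal.quotientMap _ (rnHom PZ m) _ (Ideal.Quotient.mk _ p) = Ideal.Quotient.mk _ _
  rw [Ideal.quotientMap_mk]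
  rfl

lemma sigma_C (S : AnalyticAStructure PZ IA (LaurentSeries k) (laurentO k) (laurentM k))
    (m : ℕ) (a : PZ) :
    ∀ v, S.σ m (toAm PZ IA m (MvPolynomial.C a)) v
      = S.σ 0 (toAm PZ IA 0 (MvPolynomial.C a)) (fun i => i.elim0) := by
  induction m with
  | zero =>
      intro v
      have hv : v = fun i => i.elim0 := funext fun i => i.elim0
      rw [hv]
  | succ m ih =>
      intro v
      have h := S.extends_ m (toAm PZ IA m (MvPolynomial.C a)) v
      rw [toAm_liftRename, MvPolynomial.rename_C] at h
      rw [h]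
      exact ih _

lemma sigma_memM (S : AnalyticAStructure PZ IA (LaurentSeries k) (laurentO k) (laurentM k))
    (m : ℕ) {a : PZ} (ha : a ∈ IA) (v : Fin m → ↥(laurentO k)) :
    S.σ m (toAm PZ IA m (MvPolynomial.C a)) v ∈ laurentM k := by
  rw [sigma_C]
  exact S.mem_max a ha _

lemma sigma_memMpow (S : AnalyticAStructure PZ IA (LaurentSeries k) (laurentO k) (laurentM k))
    {m j : ℕ} (f : Am PZ IA m) (hf : f.1 j = 0) (v : Fin m → ↥(laurentO k)) :
    S.σ m f v ∈ laurentM k ^ j := by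
  obtain ⟨h, rfl⟩ := exists_div f hf
  rw [map_pow, map_mul, Pi.mul_apply, map_pow, Pi.pow_apply]
  exact Ideal.mul_mem_right _ _
    (Ideal.pow_mem_pow (sigma_memM S m (Ideal.subset_span rfl) v) j)

def genSet (m : ℕ) : Set (MvPolynomial (Fin m) PZ) :=
  {MvPolynomial.C PowerSeries.X} ∪ Set.range MvPolynomial.X

lemma approx (m : ℕ) (p : MvPolynomial (Fin m) PZ) (j : ℕ) :
    ∃ q ∈ Subring.closure (genSet m), p - q ∈ polyI PZ IA m ^ j := by
  induction p using MvPolynomial.induction_on with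
  | C a =>
      have hmem : (∑ n ∈ Finset.range j,
          (PowerSeries.coeff (R := ℤ) n a) • (MvPolynomial.C (PowerSeries.X : PZ)
            : MvPolynomial (Fin m) PZ) ^ n) ∈ Subring.closure (genSet m) := by
        apply sum_mem
        intro n _
        apply zsmul_mem
        apply pow_mem
        apply Subring.subset_closure
        exact Or.inl rfl
      refine ⟨∑ n ∈ Finset.range j,
          (PowerSeries.coeff (R := ℤ) n a) • (MvPolynomial.C (PowerSeries.X : PZ)
            : MvPolynomial (Fin m) PZ) ^ n, hmem, ?_⟩
      have hdvd : (PowerSeries.X : PZ) ^ j ∣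
          a - ∑ n ∈ Finset.range j, (PowerSeries.coeff (R := ℤ) n a) • (PowerSeries.X : PZ) ^ n := by
        rw [PowerSeries.X_pow_dvd_iff]
        intro d hd
        rw [map_sub, map_sum]
        have hcoe : ∀ n ∈ Finset.range j,
            (PowerSeries.coeff (R := ℤ) d) ((PowerSeries.coeff (R := ℤ) n a) • (PowerSeries.X : PZ) ^ n)
              = if d = n then PowerSeries.coeff (R := ℤ) n a else 0 := by
          intro n _
          rw [map_zsmul, PowerSeries.coeff_X_pow, smul_eq_mul, mul_ite, mul_one, mul_zero]
        rw [Finset.sum_congr rfl hcoe, Finset.sum_ite_eq (Finset.range j) d _,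
          if_pos (Finset.mem_range.mpr hd), sub_self]
      obtain ⟨s, hs⟩ := hdvd
      rw [mem_polyI_pow]
      refine ⟨MvPolynomial.C s, ?_⟩
      calc MvPolynomial.C a - ∑ n ∈ Finset.range j,
            (PowerSeries.coeff (R := ℤ) n a) • (MvPolynomial.C (PowerSeries.X : PZ)
              : MvPolynomial (Fin m) PZ) ^ n
          = MvPolynomial.C (a - ∑ n ∈ Finset.range j,
              (PowerSeries.coeff (R := ℤ) n a) • (PowerSeries.X : PZ) ^ n) := by
            rw [map_sub, map_sum]
            congr 1
            exact Finset.sum_congr rfl fun n _ => by rw [map_zsmul, map_pow]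
        _ = MvPolynomial.C (PowerSeries.X : PZ) ^ j * MvPolynomial.C s := by
            rw [hs, map_mul, map_pow]
  | add p q hp hq =>
      obtain ⟨q1, hm1, h1⟩ := hp
      obtain ⟨q2, hm2, h2⟩ := hq
      refine ⟨q1 + q2, add_mem hm1 hm2, ?_⟩
      have h3 := Ideal.add_mem _ h1 h2
      rwa [show p - q1 + (q - q2) = p + q - (q1 + q2) by ring] at h3
  | mul_X p i hp =>
      obtain ⟨q1, hm1, h1⟩ := hp
      refine ⟨q1 * MvPolynomial.X i, mul_mem hm1
        (Subring.subset_closure (Or.inr ⟨i, rfl⟩)), ?_⟩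
      have h3 := Ideal.mul_mem_right (MvPolynomial.X i) _ h1
      rwa [sub_mul] at h3

lemma sigma_toAm_eq {u : ↥(laurentO k)}
    (S T : AnalyticAStructure PZ IA (LaurentSeries k) (laurentO k) (laurentM k))
    (hS : S.σ 0 (toAm PZ IA 0 (MvPolynomial.C PowerSeries.X)) = fun _ => u)
    (hT : T.σ 0 (toAm PZ IA 0 (MvPolynomial.C PowerSeries.X)) = fun _ => u)
    (m : ℕ) (v : Fin m → ↥(laurentO k)) {q : MvPolynomial (Fin m) PZ}
    (hq : q ∈ Subring.closure (genSet m)) :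
    S.σ m (toAm PZ IA m q) v = T.σ m (toAm PZ IA m q) v := by
  set F : MvPolynomial (Fin m) PZ →+* ↥(laurentO k) :=
    (Pi.evalRingHom (fun _ : Fin m → ↥(laurentO k) => ↥(laurentO k)) v).comp
      ((S.σ m).comp (toAm PZ IA m)) with hF
  set G : MvPolynomial (Fin m) PZ →+* ↥(laurentO k) :=
    (Pi.evalRingHom (fun _ : Fin m → ↥(laurentO k) => ↥(laurentO k)) v).comp
      ((T.σ m).comp (toAm PZ IA m)) with hG
  have key : Subring.closure (genSet m) ≤ RingHom.eqLocus F G := by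
    rw [Subring.closure_le]
    rintro x (hx | ⟨i, rfl⟩)
    · rw [Set.mem_singleton_iff] at hx
      subst hx
      show F _ = G _
      rw [hF, hG]
      simp only [RingHom.comp_apply, Pi.evalRingHom_apply]
      rw [sigma_C S, sigma_C T, hS, hT]
    · show F _ = G _
      rw [hF, hG]
      simp only [RingHom.comp_apply, Pi.evalRingHom_apply]
      rw [S.coord, T.coord]
  exact key hq

def xO : ↥(laurentO k) :=
  ⟨HahnSeries.ofPowerSeries ℤ k PowerSeries.X, RingHom.mem_range.mpr ⟨_, rfl⟩⟩

lemma laurentM_eq : laurentM k = Ideal.span {(xO : ↥(laurentO k))} := by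
  apply le_antisymm
  · intro x hx
    obtain ⟨p, hp0, hpx⟩ := hx
    obtain ⟨r, hr⟩ := PowerSeries.X_dvd_iff.mpr hp0
    rw [Ideal.mem_span_singleton]
    refine ⟨⟨HahnSeries.ofPowerSeries ℤ k r, RingHom.mem_range.mpr ⟨_, rfl⟩⟩, ?_⟩
    apply Subtype.ext
    show (x : LaurentSeries k) = _
    rw [← hpx, hr, map_mul]
    rfl
  · rw [Ideal.span_le]
    rintro x hx
    rw [Set.mem_singleton_iff] at hx
    subst hx
    exact ⟨PowerSeries.X, PowerSeries.constantCoeff_X, rfl⟩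

lemma sep_O (d : ↥(laurentO k)) (h : ∀ j, d ∈ laurentM k ^ j) : d = 0 := by
  obtain ⟨w, hwd⟩ := RingHom.mem_range.mp d.2
  have hcoeff : ∀ j, ∀ n < j, coeff (R := k) n w = 0 := by
    intro j
    have h1 := h j
    rw [laurentM_eq, Ideal.span_singleton_pow, Ideal.mem_span_singleton] at h1
    obtain ⟨c, hc⟩ := h1
    obtain ⟨r, hrc⟩ := RingHom.mem_range.mp c.2
    have h2 : HahnSeries.ofPowerSeries ℤ k w
        = HahnSeries.ofPowerSeries ℤ k (PowerSeries.X ^ j * r) := by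
      rw [hwd, hc, map_mul, map_pow, hrc]
      rfl
    have hw2 : w = PowerSeries.X ^ j * r := HahnSeries.ofPowerSeries_injective h2
    intro n hn
    rw [hw2]
    exact PowerSeries.X_pow_dvd_iff.mp (dvd_mul_right _ _) n hn
  have hw0 : w = 0 := by
    ext n
    rw [map_zero]
    exact hcoeff (n+1) n (Nat.lt_succ_self n)
  apply Subtype.ext
  rw [← hwd, hw0, map_zero]
  rfl

lemma structures_eq {u : ↥(laurentO k)}
    (S T : AnalyticAStructure PZ IA (LaurentSeries k) (laurentO k) (laurentM k))
    (hS : S.σ 0 (toAm PZ IA 0 (MvPolynomial.C PowerSeries.X)) = fun _ => u)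
    (hT : T.σ 0 (toAm PZ IA 0 (MvPolynomial.C PowerSeries.X)) = fun _ => u) :
    S = T := by
  have key : ∀ m (f : Am PZ IA m) v, S.σ m f v = T.σ m f v := by
    intro m f v
    have hdiff : ∀ j, S.σ m f v - T.σ m f v ∈ laurentM k ^ j := by
      intro j
      obtain ⟨p, hp⟩ := Ideal.Quotient.mk_surjective (f.1 j)
      obtain ⟨q, hqm, hpq⟩ := approx m p j
      have hzero : (f - toAm PZ IA m q).1 j = 0 := by
        rw [Am_sub, toAm_apply, ← hp, ← map_sub, Ideal.Quotient.eq_zero_iff_mem]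
        exact hpq
      have h1 := sigma_memMpow S (f - toAm PZ IA m q) hzero v
      have h2 := sigma_memMpow T (f - toAm PZ IA m q) hzero v
      rw [map_sub, Pi.sub_apply] at h1 h2
      rw [sigma_toAm_eq S T hS hT m v hqm] at h1
      have h3 := Ideal.sub_mem _ h1 h2
      rwa [sub_sub_sub_cancel_right] at h3
    have h4 := sep_O (S.σ m f v - T.σ m f v) hdiff
    exact sub_eq_zero.mp h4
  have hσ : S.σ = T.σ :=
    funext fun m => RingHom.ext fun f => funext fun v => key m f v
  cases S
  cases T
  have hσ' : _ = _ := hσ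
  subst hσ'
  rfl

end Uniqueness
end UA


/-- **The uniqueness of analytic `ℤ[[t]]`-structures on `k((t))`** (after
Definition 2.8 of the paper).  Let `A = ℤ[[t]]` with `I = tℤ[[t]]` and let `k` be any
field.  On `K = k((t))` with its valuation ring `O_K = k[[t]]`, for every element `u`
of the maximal ideal there is exactly one analytic `A`-structure `(σ_m)_m` with
`σ_0(t) = u`. -/
theorem unique_analytic_structure_on_laurent_series
    (u : laurentO k) (hu : u ∈ laurentM k) :
    ∃! S : AnalyticAStructure (PowerSeries ℤ)
        (Ideal.span {(PowerSeries.X : PowerSeries ℤ)})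
        (LaurentSeries k) (laurentO k) (laurentM k),
      S.σ 0 (toAm (PowerSeries ℤ) (Ideal.span {(PowerSeries.X : PowerSeries ℤ)}) 0
        (MvPolynomial.C PowerSeries.X)) = fun _ => u := by
  obtain ⟨uu, huu0, huuu⟩ := hu
  have hprop : (UA.theStructure huu0).σ 0 (toAm UA.PZ UA.IA 0
      (MvPolynomial.C PowerSeries.X)) = fun _ => u := by
    funext v
    apply Subtype.ext
    show HahnSeries.ofPowerSeries ℤ k (UA.glue k (UA.seqOf huu0 0
      (toAm UA.PZ UA.IA 0 (MvPolynomial.C PowerSeries.X)) v)) = (u : LaurentSeries k)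
    have h : UA.glue k (UA.seqOf huu0 0
        (toAm UA.PZ UA.IA 0 (MvPolynomial.C PowerSeries.X)) v) = uu :=
      UA.glue_unique k fun j => by
        show Ideal.Quotient.mk _ uu
          = UA.sbar huu0 0 j (fun i => UA.liftO (v i))
            ((toAm UA.PZ UA.IA 0 (MvPolynomial.C PowerSeries.X)).1 j)
        rw [UA.toAm_apply, UA.sbar_mk, UA.evj_CX]
    rw [h, huuu]
  exact ⟨UA.theStructure huu0, hprop,
    fun S hS => UA.structures_eq S (UA.theStructure huu0) hS hprop⟩

end LaurentSeriesStructure
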